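/- Let T > 0, ε > 0, m ≥ 0, C ≥ 0, and let f : (0,T] → ℝ be continuous with |f(t)| ≤ C t^ε for all t ∈ (0,T]. Then there exists exactly one differentiable function y : (0,T] → ℝ satisfying t y'(t) + m y(t) = f(t) for all t ∈ (0,T] and y(t) → 0 as t → 0⁺; moreover this solution satisfies |y(t)| ≤ C t^ε / (m + ε) for all t ∈ (0,T]. -/

import Mathlib

open Filter MeasureTheory intervalIntegral

/-- Basic linear Fuchsian ODE lemma: for `m ≥ 0`, `ε > 0` and continuous `f` with
`|f t| ≤ C t^ε`, the singular equation `t y'(t) + m y(t) = f(t)` on `(0,T]` has exactly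
one solution with `y(t) → 0` as `t → 0⁺`, and it satisfies `|y t| ≤ C t^ε / (m + ε)`. -/
theorem linear_fuchsian_ode_lemma
    (T ε m C : ℝ) (hT : 0 < T) (hε : 0 < ε) (hm : 0 ≤ m) (hC : 0 ≤ C)
    (f : ℝ → ℝ) (hf : ContinuousOn f (Set.Ioc 0 T))
    (hbd : ∀ t ∈ Set.Ioc (0:ℝ) T, |f t| ≤ C * t ^ ε) :
    ∃ y : ℝ → ℝ,
      ((∀ t ∈ Set.Ioc (0:ℝ) T, DifferentiableAt ℝ y t ∧
          t * deriv y t + m * y t = f t) ∧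
        Tendsto y (nhdsWithin 0 (Set.Ioi 0)) (nhds 0)) ∧
      (∀ t ∈ Set.Ioc (0:ℝ) T, |y t| ≤ C * t ^ ε / (m + ε)) ∧
      ∀ z : ℝ → ℝ,
        ((∀ t ∈ Set.Ioc (0:ℝ) T, DifferentiableAt ℝ z t ∧
            t * deriv z t + m * z t = f t) ∧
          Tendsto z (nhdsWithin 0 (Set.Ioi 0)) (nhds 0)) →
        Set.EqOn z y (Set.Ioc 0 T) := by
  have hmε : 0 < m + ε := by linarith
  set g : ℝ → ℝ := fun s => s ^ (m - 1) * f (min s T) with hgdef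
  -- continuity of g on (0, ∞)
  have hgcont : ContinuousOn g (Set.Ioi 0) := by
    apply ContinuousOn.mul
    · exact fun s hs => (Real.continuousAt_rpow_const s (m-1)
        (Or.inl (ne_of_gt hs))).continuousWithinAt
    · refine hf.comp ((continuous_id.min continuous_const).continuousOn) ?_
      intro s hs
      exact ⟨lt_min hs hT, min_le_right _ _⟩
  have hgbound : ∀ s ∈ Set.Ioi (0:ℝ), |g s| ≤ C * s ^ (m - 1 + ε) := by
    intro s hs
    have hs0 : (0:ℝ) < s := hs
    have hmin : min s T ∈ Set.Ioc (0:ℝ) T := ⟨lt_min hs0 hT, min_le_right _ _⟩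
    have h1 : |f (min s T)| ≤ C * (min s T) ^ ε := hbd _ hmin
    have h2 : (min s T) ^ ε ≤ s ^ ε :=
      Real.rpow_le_rpow hmin.1.le (min_le_left _ _) hε.le
    have h3 : |g s| = s ^ (m-1) * |f (min s T)| := by
      rw [hgdef, abs_mul, abs_of_nonneg (Real.rpow_nonneg hs0.le _)]
    rw [h3, Real.rpow_add hs0]
    calc s ^ (m-1) * |f (min s T)| ≤ s ^ (m-1) * (C * s ^ ε) := by
          apply mul_le_mul_of_nonneg_left _ (Real.rpow_nonneg hs0.le _)
          exact h1.trans (mul_le_mul_of_nonneg_left h2 hC)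
      _ = C * (s ^ (m-1) * s ^ ε) := by ring
  -- integrability of g on (0, t]
  have hgint : ∀ t : ℝ, 0 < t → IntervalIntegrable g volume 0 t := by
    intro t ht
    rw [intervalIntegrable_iff, Set.uIoc_of_le ht.le]
    have hbint : IntegrableOn (fun s : ℝ => C * s ^ (m - 1 + ε)) (Set.Ioc 0 t) := by
      have := (intervalIntegrable_rpow' (a := 0) (b := t)
        (r := m - 1 + ε) (by linarith)).const_mul C
      rw [intervalIntegrable_iff, Set.uIoc_of_le ht.le] at this
      exact this
    refine hbint.mono' ?_ ?_
    · exact (hgcont.mono (Set.Ioc_subset_Ioi_self)).aestronglyMeasurable measurableSet_Ioc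
    · refine (ae_restrict_iff' measurableSet_Ioc).2 (ae_of_all _ ?_)
      intro s hs
      exact hgbound s hs.1
  set F : ℝ → ℝ := fun t => ∫ s in (0:ℝ)..t, g s with hFdef
  set y : ℝ → ℝ := fun t => t ^ (-m) * F t with hydef
  -- bound on F
  have hFbd : ∀ t : ℝ, 0 < t → |F t| ≤ C * t ^ (m + ε) / (m + ε) := by
    intro t ht
    have h1 : ‖∫ s in (0:ℝ)..t, g s‖ ≤ |∫ s in (0:ℝ)..t, C * s ^ (m - 1 + ε)| := by
      refine intervalIntegral.norm_integral_le_abs_of_norm_le ?_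
        ((intervalIntegrable_rpow' (a := 0) (b := t) (r := m - 1 + ε)
          (by linarith)).const_mul C)
      rw [Set.uIoc_of_le ht.le]
      refine (ae_restrict_iff' measurableSet_Ioc).2 (ae_of_all _ fun s hs => ?_)
      simpa [Real.norm_eq_abs] using hgbound s hs.1
    have h2 : ∫ s in (0:ℝ)..t, C * s ^ (m - 1 + ε) = C * t ^ (m + ε) / (m + ε) := by
      rw [intervalIntegral.integral_const_mul, integral_rpow (Or.inl (by linarith))]
      rw [Real.zero_rpow (by linarith : m - 1 + ε + 1 ≠ 0)]
      ring_nf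
    rw [h2, abs_of_nonneg (div_nonneg (by positivity) hmε.le)] at h1
    simpa [hFdef, Real.norm_eq_abs] using h1
  have hybd : ∀ t ∈ Set.Ioc (0:ℝ) T, |y t| ≤ C * t ^ ε / (m + ε) := by
    intro t ht
    have ht0 := ht.1
    have : |y t| = t ^ (-m) * |F t| := by
      rw [hydef, abs_mul, abs_of_nonneg (Real.rpow_nonneg ht0.le _)]
    rw [this]
    calc t ^ (-m) * |F t| ≤ t ^ (-m) * (C * t ^ (m + ε) / (m + ε)) :=
          mul_le_mul_of_nonneg_left (hFbd t ht0) (Real.rpow_nonneg ht0.le _)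
      _ = C * t ^ ε / (m + ε) := by
          rw [show C * t ^ (m + ε) / (m + ε) = (C / (m+ε)) * t ^ (m+ε) by ring,
            ← mul_assoc, mul_comm (t ^ (-m)), mul_assoc, ← Real.rpow_add ht0]
          ring_nf
  -- derivative of y
  have hFderiv : ∀ t : ℝ, 0 < t → HasDerivAt F (g t) t := by
    intro t ht
    refine intervalIntegral.integral_hasDerivAt_right (hgint t ht) ?_ ?_
    · exact hgcont.stronglyMeasurableAtFilter isOpen_Ioi t ht
    · exact hgcont.continuousAt (Ioi_mem_nhds ht)
  have hyderiv : ∀ t : ℝ, 0 < t →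
      HasDerivAt y (-m * t ^ (-m - 1) * F t + t ^ (-m) * g t) t := by
    intro t ht
    have h1 : HasDerivAt (fun s : ℝ => s ^ (-m)) (-m * t ^ (-m - 1)) t := by
      simpa using Real.hasDerivAt_rpow_const (p := -m) (Or.inl (ne_of_gt ht))
    exact h1.mul (hFderiv t ht)
  have heq : ∀ t ∈ Set.Ioc (0:ℝ) T,
      t * (-m * t ^ (-m - 1) * F t + t ^ (-m) * g t) + m * y t = f t := by
    intro t ht
    have ht0 := ht.1
    have hmin : min t T = t := min_eq_left ht.2
    have e1 : t * t ^ (-m - 1) = t ^ (-m) := by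
      have h' := Real.rpow_add ht0 1 (-m - 1)
      rw [Real.rpow_one] at h'
      rw [← h']; norm_num
    have e2 : t * (t ^ (-m) * g t) = f t := by
      rw [hgdef]
      simp only [hmin]
      rw [show t * (t ^ (-m) * (t ^ (m-1) * f t)) = (t ^ (1:ℝ) * t ^ (-m) * t ^ (m-1)) * f t
        by rw [Real.rpow_one]; ring,
        ← Real.rpow_add ht0, ← Real.rpow_add ht0,
        show (1:ℝ) + -m + (m - 1) = 0 by ring, Real.rpow_zero, one_mul]
    rw [hydef]
    have : t * (-m * t ^ (-m-1) * F t + t ^ (-m) * g t)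
        = -m * (t * t ^ (-m-1)) * F t + t * (t ^ (-m) * g t) := by ring
    rw [this, e1, e2]; ring
  -- tendsto 0
  have hytend : Tendsto y (nhdsWithin 0 (Set.Ioi 0)) (nhds 0) := by
    have hb : Tendsto (fun t : ℝ => C * t ^ ε / (m + ε)) (nhdsWithin 0 (Set.Ioi 0)) (nhds 0) := by
      have h1 : Tendsto (fun t : ℝ => t ^ ε) (nhdsWithin 0 (Set.Ioi 0)) (nhds 0) := by
        have := (Real.continuousAt_rpow_const 0 ε (Or.inr hε.le)).continuousWithinAt
          (s := Set.Ioi (0:ℝ))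
        simpa [ContinuousWithinAt, Real.zero_rpow hε.ne'] using this
      have := (h1.const_mul C).div_const (m + ε)
      simpa using this
    refine squeeze_zero_norm' ?_ hb
    filter_upwards [Ioo_mem_nhdsGT_of_mem (by constructor <;> [rfl; exact hT] : (0:ℝ) ∈ Set.Ico 0 T)]
      with t ht
    exact hybd t ⟨ht.1, ht.2.le⟩
  refine ⟨y, ⟨fun t ht => ⟨(hyderiv t ht.1).differentiableAt, ?_⟩, hytend⟩, hybd, ?_⟩
  · rw [(hyderiv t ht.1).deriv]; exact heq t ht
  -- uniqueness
  · intro z ⟨hzsol, hztend⟩ t ht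
    set w : ℝ → ℝ := fun s => z s - y s with hwdef
    set h : ℝ → ℝ := fun s => s ^ m * w s with hhdef
    have hwderiv : ∀ s ∈ Set.Ioc (0:ℝ) T, HasDerivAt h 0 s := by
      intro s hs
      have hs0 := hs.1
      have hz := hzsol s hs
      have hy := hyderiv s hs0
      have hy' : s * deriv y s + m * y s = f s := by
        rw [hy.deriv]; exact heq s hs
      have hzd : HasDerivAt z (deriv z s) s := hz.1.hasDerivAt
      have hwd : HasDerivAt w (deriv z s - deriv y s) s := by
        exact hzd.sub (hy.differentiableAt.hasDerivAt)
      have h1 : HasDerivAt (fun u : ℝ => u ^ m) (m * s ^ (m - 1)) s :=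
        Real.hasDerivAt_rpow_const (Or.inl (ne_of_gt hs0))
      have h2 : HasDerivAt h (m * s ^ (m-1) * w s + s ^ m * (deriv z s - deriv y s)) s :=
        h1.mul hwd
      have key : m * s ^ (m-1) * w s + s ^ m * (deriv z s - deriv y s) = 0 := by
        have e1 : s * (deriv z s - deriv y s) = -m * w s := by
          have h3 := hz.2
          simp only [hwdef]
          ring_nf
          ring_nf at h3 hy'
          linarith
        have e2 : s ^ m = s ^ (m-1) * s := by
          have h' := Real.rpow_add hs0 (m - 1) 1
          rw [Real.rpow_one] at h'
          rw [← h']; norm_num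
        rw [e2]
        calc m * s ^ (m-1) * w s + s ^ (m-1) * s * (deriv z s - deriv y s)
            = m * s ^ (m-1) * w s + s ^ (m-1) * (s * (deriv z s - deriv y s)) := by ring
          _ = m * s ^ (m-1) * w s + s ^ (m-1) * (-m * w s) := by rw [e1]
          _ = 0 := by ring
      rw [key] at h2; exact h2
    -- h is constant on (0, T]
    have hconst : ∀ s ∈ Set.Ioc (0:ℝ) T, h T = h s := by
      intro s hs
      have hcont : ContinuousOn h (Set.Icc s T) := by
        intro u hu
        exact ((hwderiv u ⟨lt_of_lt_of_le hs.1 hu.1, hu.2⟩).continuousAt).continuousWithinAt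
      have hder : ∀ u ∈ Set.Ico s T, HasDerivWithinAt h 0 (Set.Ici u) u := by
        intro u hu
        exact ((hwderiv u ⟨lt_of_lt_of_le hs.1 hu.1, hu.2.le⟩)).hasDerivWithinAt
      exact constant_of_has_deriv_right_zero hcont hder T ⟨hs.2, le_refl T⟩
    -- h tends to 0
    have hwtend : Tendsto w (nhdsWithin 0 (Set.Ioi 0)) (nhds 0) := by
      simpa [hwdef] using hztend.sub hytend
    have hhtend : Tendsto h (nhdsWithin 0 (Set.Ioi 0)) (nhds 0) := by
      refine squeeze_zero_norm' ?_ (by simpa using hwtend.norm)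
      filter_upwards [Ioo_mem_nhdsGT_of_mem
        (by constructor <;> [rfl; exact zero_lt_one] : (0:ℝ) ∈ Set.Ico 0 1)] with s hs
      have : |h s| = s ^ m * |w s| := by
        rw [hhdef, abs_mul, abs_of_nonneg (Real.rpow_nonneg hs.1.le _)]
      rw [Real.norm_eq_abs, this]
      have h1 : s ^ m ≤ 1 := Real.rpow_le_one hs.1.le hs.2.le hm
      nlinarith [abs_nonneg (w s), Real.rpow_nonneg hs.1.le m]
    have hhT : h T = 0 := by
      have : Tendsto h (nhdsWithin 0 (Set.Ioi 0)) (nhds (h T)) := by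
        refine Tendsto.congr' ?_ tendsto_const_nhds
        filter_upwards [Ioo_mem_nhdsGT_of_mem
          (by constructor <;> [rfl; exact hT] : (0:ℝ) ∈ Set.Ico 0 T)] with s hs
        exact hconst s ⟨hs.1, hs.2.le⟩
      exact tendsto_nhds_unique this hhtend
    have : h t = 0 := (hconst t ht).symm.trans hhT
    have hne : t ^ m ≠ 0 := ne_of_gt (Real.rpow_pos_of_pos ht.1 m)
    have := mul_eq_zero.1 this
    rcases this with h' | h'
    · exact absurd h' hne
    · rw [hwdef] at h'; linarith [sub_eq_zero.1 h']
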